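/- Let A and M be n×n real symmetric positive definite matrices with MA = AM. Let g₀ ∈ ℝⁿ with g₀ ≠ 0, let α₀ ∈ ℝ be arbitrary, and set g₁ = (I − α₀A)g₀, α₁ = ⟨g₀, M g₀⟩/⟨g₀, M A g₀⟩, and g₂ = (I − α₁A)g₁. If q ∈ ℝⁿ satisfies (I − α₀A)q = g₀, then ⟨q, M g₂⟩ = 0. -/

import Mathlib

open Matrix

/-- Move a symmetric matrix across the dot product. -/
lemma symm_move {n : ℕ} {B : Matrix (Fin n) (Fin n) ℝ} (hB : B.IsHermitian)
    (x y : Fin n → ℝ) : x ⬝ᵥ (B *ᵥ y) = (B *ᵥ x) ⬝ᵥ y := by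
  rw [Matrix.dotProduct_mulVec, ← Matrix.mulVec_transpose]
  congr 1
  · rw [show Bᵀ = B from hB]

/-- Square root of a positive semidefinite real matrix via its spectral decomposition. -/
noncomputable def Matrix.PosSemidef.sqrt {n : ℕ} {M : Matrix (Fin n) (Fin n) ℝ}
    (hM : M.PosSemidef) : Matrix (Fin n) (Fin n) ℝ :=
  (hM.1.eigenvectorUnitary : Matrix (Fin n) (Fin n) ℝ) *
    diagonal ((↑) ∘ Real.sqrt ∘ hM.1.eigenvalues) *
    star (hM.1.eigenvectorUnitary : Matrix (Fin n) (Fin n) ℝ)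

lemma Matrix.IsHermitian.star_mul_self_mul_eq_diagonal' {n : ℕ} {M : Matrix (Fin n) (Fin n) ℝ}
    (hM : M.IsHermitian) :
    star (hM.eigenvectorUnitary : Matrix (Fin n) (Fin n) ℝ) * M *
      (hM.eigenvectorUnitary : Matrix (Fin n) (Fin n) ℝ) =
      diagonal (RCLike.ofReal ∘ hM.eigenvalues) := by
  have h := hM.conjStarAlgAut_star_eigenvectorUnitary
  rw [Unitary.conjStarAlgAut_star_apply] at h
  exact h

lemma Matrix.PosSemidef.sqrt_mul_self {n : ℕ} {M : Matrix (Fin n) (Fin n) ℝ}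
    (hM : M.PosSemidef) : hM.sqrt * hM.sqrt = M := by
  have hUU : star (hM.1.eigenvectorUnitary : Matrix (Fin n) (Fin n) ℝ) *
      (hM.1.eigenvectorUnitary : Matrix (Fin n) (Fin n) ℝ) = 1 :=
    (Matrix.mem_unitaryGroup_iff').mp hM.1.eigenvectorUnitary.2
  have hs := hM.1.spectral_theorem
  rw [Unitary.conjStarAlgAut_apply] at hs
  have hD : diagonal ((↑) ∘ Real.sqrt ∘ hM.1.eigenvalues) *
      diagonal ((↑) ∘ Real.sqrt ∘ hM.1.eigenvalues) =
      (diagonal (RCLike.ofReal ∘ hM.1.eigenvalues) : Matrix (Fin n) (Fin n) ℝ) := by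
    rw [diagonal_mul_diagonal]
    congr 1
    funext i
    simp [Real.mul_self_sqrt (hM.eigenvalues_nonneg i)]
  unfold Matrix.PosSemidef.sqrt
  set U := (hM.1.eigenvectorUnitary : Matrix (Fin n) (Fin n) ℝ)
  set Ds : Matrix (Fin n) (Fin n) ℝ := diagonal ((↑) ∘ Real.sqrt ∘ hM.1.eigenvalues)
  calc U * Ds * star U * (U * Ds * star U) = U * (Ds * (star U * U) * Ds) * star U := by
        noncomm_ring
    _ = U * diagonal (RCLike.ofReal ∘ hM.1.eigenvalues) * star U := by rw [hUU, mul_one, hD]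
    _ = M := hs.symm

lemma Matrix.PosSemidef.isHermitian_sqrt {n : ℕ} {M : Matrix (Fin n) (Fin n) ℝ}
    (hM : M.PosSemidef) : hM.sqrt.IsHermitian := by
  unfold Matrix.PosSemidef.sqrt
  rw [star_eq_conjTranspose]
  exact isHermitian_mul_mul_conjTranspose _ (isHermitian_diagonal _)

/-- sqrt commutes with anything commuting with the matrix. -/
lemma commute_sqrt {n : ℕ} {M A : Matrix (Fin n) (Fin n) ℝ} (hM : M.PosSemidef)
    (hcomm : M * A = A * M) : A * hM.sqrt = hM.sqrt * A := by
  set U : Matrix (Fin n) (Fin n) ℝ := (hM.1.eigenvectorUnitary : Matrix (Fin n) (Fin n) ℝ)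
  have hUU : star U * U = 1 := by
    exact (Matrix.mem_unitaryGroup_iff').mp hM.1.eigenvectorUnitary.2
  have hUU' : U * star U = 1 := by
    exact (Matrix.mem_unitaryGroup_iff).mp hM.1.eigenvectorUnitary.2
  set B : Matrix (Fin n) (Fin n) ℝ := star U * A * U with hB
  set Dm : Matrix (Fin n) (Fin n) ℝ := diagonal (RCLike.ofReal ∘ hM.1.eigenvalues) with hDm
  set Ds : Matrix (Fin n) (Fin n) ℝ :=
    diagonal ((↑) ∘ Real.sqrt ∘ hM.1.eigenvalues) with hDs
  have hMd : star U * M * U = Dm := hM.1.star_mul_self_mul_eq_diagonal'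
  have hA' : U * B * star U = A := by
    rw [hB]
    calc U * (star U * A * U) * star U = (U * star U) * A * (U * star U) := by
          noncomm_ring
      _ = A := by rw [hUU', one_mul, mul_one]
  have hDB : Dm * B = B * Dm := by
    calc Dm * B = (star U * M * U) * (star U * A * U) := by rw [hMd]
      _ = star U * (M * (U * star U) * A) * U := by noncomm_ring
      _ = star U * (M * A) * U := by rw [hUU', mul_one]
      _ = star U * (A * M) * U := by rw [hcomm]
      _ = star U * (A * (U * star U) * M) * U := by rw [hUU', mul_one]
      _ = (star U * A * U) * (star U * M * U) := by noncomm_ring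
      _ = B * Dm := by rw [hMd]
  have hDsB : Ds * B = B * Ds := by
    ext i j
    have h1 := congrFun (congrFun hDB i) j
    simp only [hDm, hDs, Matrix.diagonal_mul, Matrix.mul_diagonal, Function.comp_apply,
      RCLike.ofReal_real_eq_id, id_eq] at h1 ⊢
    rcases eq_or_ne (B i j) 0 with h | h
    · simp [h]
    · have h2 : hM.1.eigenvalues i * B i j = hM.1.eigenvalues j * B i j :=
        h1.trans (mul_comm _ _)
      have h3 : hM.1.eigenvalues i = hM.1.eigenvalues j := mul_right_cancel₀ h h2
      rw [h3, mul_comm]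
  have hsqrt : hM.sqrt = U * Ds * star U := rfl
  rw [hsqrt, ← hA']
  calc (U * B * star U) * (U * Ds * star U)
      = U * (B * (star U * U) * Ds) * star U := by noncomm_ring
    _ = U * (B * Ds) * star U := by rw [hUU, mul_one]
    _ = U * (Ds * B) * star U := by rw [hDsB]
    _ = U * (Ds * (star U * U) * B) * star U := by rw [hUU, mul_one]
    _ = (U * Ds * star U) * (U * B * star U) := by noncomm_ring

/-- Lemma 1 (orthogonal property): for symmetric positive definite commuting
matrices `A` and `M`, the gradient recursion with the (glstep1) stepsize
makes `q` (where `(I - α₀ A) q = g₀`) `M`-orthogonal to `g₂`. -/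
theorem orthogonal_property {n : ℕ} (A M : Matrix (Fin n) (Fin n) ℝ)
    (hA : A.PosDef) (hM : M.PosDef) (hcomm : M * A = A * M)
    (g₀ : Fin n → ℝ) (hg₀ : g₀ ≠ 0) (α₀ : ℝ)
    (g₁ : Fin n → ℝ) (hg₁ : g₁ = g₀ - α₀ • (A *ᵥ g₀))
    (α₁ : ℝ) (hα₁ : α₁ = (g₀ ⬝ᵥ (M *ᵥ g₀)) / (g₀ ⬝ᵥ (M *ᵥ (A *ᵥ g₀))))
    (g₂ : Fin n → ℝ) (hg₂ : g₂ = g₁ - α₁ • (A *ᵥ g₁))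
    (q : Fin n → ℝ) (hq : q - α₀ • (A *ᵥ q) = g₀) :
    q ⬝ᵥ (M *ᵥ g₂) = 0 := by
  have hScomm := commute_sqrt hM.posSemidef hcomm
  set S := hM.posSemidef.sqrt with hS
  have hSS : S * S = M := hM.posSemidef.sqrt_mul_self
  have hSherm : S.IsHermitian := hM.posSemidef.isHermitian_sqrt
  have hSg : S *ᵥ g₀ ≠ 0 := by
    intro h
    have hMg : M *ᵥ g₀ = 0 := by
      rw [← hSS, ← mulVec_mulVec, h, mulVec_zero]
    have h2 := hM.dotProduct_mulVec_pos hg₀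
    rw [hMg] at h2
    simp at h2
  have hD : 0 < g₀ ⬝ᵥ (M *ᵥ (A *ᵥ g₀)) := by
    have hmm : M * A = S * (A * S) := by
      rw [← hSS, mul_assoc, ← hScomm]
    have h1 : M *ᵥ (A *ᵥ g₀) = S *ᵥ (A *ᵥ (S *ᵥ g₀)) := by
      simp only [mulVec_mulVec]
      rw [hmm]
    rw [h1, symm_move hSherm]
    have h2 := hA.dotProduct_mulVec_pos hSg
    simpa using h2
  have hDne : g₀ ⬝ᵥ (M *ᵥ (A *ᵥ g₀)) ≠ 0 := ne_of_gt hD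
  have hmove : ∀ y : Fin n → ℝ, (A *ᵥ q) ⬝ᵥ (M *ᵥ y) = q ⬝ᵥ (M *ᵥ (A *ᵥ y)) := by
    intro y
    rw [← symm_move hA.1, mulVec_mulVec, mulVec_mulVec, ← hcomm]
  have claim1 : q ⬝ᵥ (M *ᵥ g₁) = g₀ ⬝ᵥ (M *ᵥ g₀) := by
    have e2 : g₀ ⬝ᵥ (M *ᵥ g₀) =
        q ⬝ᵥ (M *ᵥ g₀) - α₀ * (q ⬝ᵥ (M *ᵥ (A *ᵥ g₀))) := by
      nth_rewrite 1 [← hq]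
      rw [sub_dotProduct, smul_dotProduct, hmove g₀, smul_eq_mul]
    rw [hg₁, mulVec_sub, mulVec_smul, dotProduct_sub, dotProduct_smul, smul_eq_mul, e2]
  have claim2 : q ⬝ᵥ (M *ᵥ (A *ᵥ g₁)) = g₀ ⬝ᵥ (M *ᵥ (A *ᵥ g₀)) := by
    have e2 : g₀ ⬝ᵥ (M *ᵥ (A *ᵥ g₀)) =
        q ⬝ᵥ (M *ᵥ (A *ᵥ g₀)) - α₀ * (q ⬝ᵥ (M *ᵥ (A *ᵥ (A *ᵥ g₀)))) := by
      nth_rewrite 1 [← hq]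
      rw [sub_dotProduct, smul_dotProduct, hmove (A *ᵥ g₀), smul_eq_mul]
    rw [hg₁, mulVec_sub, mulVec_smul, mulVec_sub, mulVec_smul,
      dotProduct_sub, dotProduct_smul, smul_eq_mul, e2]
  rw [hg₂, mulVec_sub, mulVec_smul, dotProduct_sub, dotProduct_smul, smul_eq_mul,
    claim1, claim2, hα₁, div_mul_cancel₀ _ hDne, sub_self]
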